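/- Decision-hazard-decision dynamic programming with independent noises (finite case): let (W♭_1,...,W♭_S) be independent noises with values in finite sets, X_0,...,X_S finite state spaces, head control sets U♯_s and tail control sets U♭_s finite, and dynamics f_s : X_s × U♯_s × W♭_{s+1} × U♭_{s+1} → X_{s+1}. Define Ṽ_S = j̃ for nonnegative j̃ : X_S → [0,∞], and Ṽ_s(x) = inf_{u♯ ∈ U♯_s} E[ inf_{u♭ ∈ U♭_{s+1}} Ṽ_{s+1}( f_s(x, u♯, W♭_{s+1}, u♭) ) ]. Then Ṽ_s(x_s) equals the infimum, over head control processes (U♯_s,...,U♯_{S-1}) with σ(U♯_{s'}) ⊆ σ(W♭_{s+1},...,W♭_{s'}) and tail control processes (U♭_{s+1},...,U♭_S) with σ(U♭_{s'}) ⊆ σ(W♭_{s+1},...,W♭_{s'}), of E[ j̃(X_S) ], where X_s = x_s and X_{s'+1} = f_{s'}(X_{s'}, U♯_{s'}, W♭_{s'+1}, U♭_{s'+1}). -/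

import Mathlib

open scoped ENNReal
open Classical

/-- Transport of a state along an equality of time indices. -/
def xcast {X : ℕ → Type} {a b : ℕ} (e : a = b) (x : X a) : X b := e ▸ x

/-- The decision-hazard-decision value functions
`Ṽ_{s+n} = K`, `Ṽ_s(x) = inf_{u♯} E[ inf_{u♭} Ṽ_{s+1}(f_s(x, u♯, W♭_{s+1}, u♭)) ]`. -/
noncomputable def VtilD {Wn Uh Ub X : ℕ → Type} {Ω : Type}
    (P : Ω → ℝ≥0∞) (Wp : ∀ s, Ω → Wn s)
    (f : ∀ s, X s → Uh s → Wn (s + 1) → Ub (s + 1) → X (s + 1)) :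
    ∀ (n s : ℕ), (X (s + n) → ℝ≥0∞) → X s → ℝ≥0∞
  | 0, _, K, x => K x
  | n + 1, s, K, x =>
      ⨅ uh : Uh s, ∑' ω : Ω,
        (⨅ ub : Ub (s + 1),
          VtilD P Wp f n (s + 1) (fun x' => K (xcast (by omega) x'))
            (f s x uh (Wp (s + 1) ω) ub)) * P ω

/-- The random state trajectory `X_s = x`,
`X_{s'+1} = f_{s'}(X_{s'}, U♯_{s'}, W♭_{s'+1}, U♭_{s'+1})` driven by a head control process
`Uhp`, a tail control process `Ubp` and the noises. -/
def trajD {Wn Uh Ub X : ℕ → Type} {Ω : Type}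
    (f : ∀ s, X s → Uh s → Wn (s + 1) → Ub (s + 1) → X (s + 1))
    (Uhp : ∀ s, Ω → Uh s) (Ubp : ∀ s, Ω → Ub s) (Wp : ∀ s, Ω → Wn s) :
    ∀ (n s : ℕ), X s → Ω → X (s + n)
  | 0, _, x, _ => x
  | n + 1, s, x, ω =>
      f (s + n) (trajD f Uhp Ubp Wp n s x ω) (Uhp (s + n) ω)
        (Wp (s + n + 1) ω) (Ubp (s + n + 1) ω)

section DHDAux

lemma xcast_rfl {X : ℕ → Type} {a : ℕ} (e : a = a) (x : X a) : xcast e x = x := rfl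

lemma xcast_eq_of_heq {X : ℕ → Type} {a b : ℕ} (e : a = b) {x : X a} {y : X b}
    (h : HEq x y) : xcast e x = y := by subst e; exact eq_of_heq h

lemma exists_iInf {ι : Type*} [Finite ι] [Nonempty ι] (g : ι → ℝ≥0∞) :
    ∃ i, g i = ⨅ j, g j := by
  obtain ⟨i, hi⟩ := Finite.exists_min g
  exact ⟨i, le_antisymm (le_iInf hi) (iInf_le g i)⟩

lemma tsum_fiber {α β : Type*} (ψ : α → β) (F : α → ℝ≥0∞) :
    ∑' a, F a = ∑' b, ∑' a, if ψ a = b then F a else 0 := by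
  rw [ENNReal.tsum_comm]
  refine (tsum_congr fun a => ?_).symm
  simp only [eq_comm (a := ψ a)]
  exact tsum_ite_eq (ψ a) (fun _ => F a)

variable {Wn Uh Ub X : ℕ → Type} {Ω : Type}

/-- a function of the full noise tuple depends only on stages in `Ioc a b` -/
def DepOn (Wn : ℕ → Type) {γ : Type*} (a b : ℕ) (g : (∀ r, Wn r) → γ) : Prop :=
  ∀ v v' : ∀ r, Wn r, (∀ r, a < r → r ≤ b → v r = v' r) → g v = g v'

/-- turn a functional policy into an `Ω`-indexed control process -/
def toC {Wn : ℕ → Type} {Ω : Type} {γ : ℕ → Type} (Wp : ∀ s, Ω → Wn s)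
    (G : ∀ s', (∀ r, Wn r) → γ s') : ∀ s', Ω → γ s' :=
  fun s' ω => G s' (fun r => Wp r ω)

variable (f : ∀ s, X s → Uh s → Wn (s + 1) → Ub (s + 1) → X (s + 1))
    (Wp : ∀ s, Ω → Wn s)

lemma trajD_congr (U1h U2h : ∀ s, Ω → Uh s) (U1b U2b : ∀ s, Ω → Ub s) :
    ∀ (n a : ℕ) (x : X a) (ω : Ω), (∀ r, a ≤ r → U1h r ω = U2h r ω) →
      (∀ r, a < r → U1b r ω = U2b r ω) →
      trajD f U1h U1b Wp n a x ω = trajD f U2h U2b Wp n a x ω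
  | 0, a, x, ω, _, _ => rfl
  | n + 1, a, x, ω, h1, h2 => by
    simp only [trajD]
    rw [trajD_congr U1h U2h U1b U2b n a x ω h1 h2, h1 _ (by omega), h2 _ (by omega)]

lemma f_step_heq (Uhp : ∀ s, Ω → Uh s) (Ubp : ∀ s, Ω → Ub s) (ω : Ω) {a b : ℕ}
    (e : a = b) {xa : X a} {xb : X b} (h : HEq xa xb) :
    HEq (f a xa (Uhp a ω) (Wp (a + 1) ω) (Ubp (a + 1) ω))
      (f b xb (Uhp b ω) (Wp (b + 1) ω) (Ubp (b + 1) ω)) := by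
  subst e; rw [heq_iff_eq] at h ⊢; rw [h]

lemma trajD_shift (Uhp : ∀ s, Ω → Uh s) (Ubp : ∀ s, Ω → Ub s) :
    ∀ (n s : ℕ) (x : X s) (ω : Ω),
      HEq (trajD f Uhp Ubp Wp (n + 1) s x ω)
        (trajD f Uhp Ubp Wp n (s + 1)
          (f s x (Uhp s ω) (Wp (s + 1) ω) (Ubp (s + 1) ω)) ω)
  | 0, s, x, ω => HEq.rfl
  | n + 1, s, x, ω => by
    show HEq (f (s + (n + 1)) (trajD f Uhp Ubp Wp (n + 1) s x ω) _ _ _)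
      (f (s + 1 + n) (trajD f Uhp Ubp Wp n (s + 1) _ ω) _ _ _)
    exact f_step_heq f Wp Uhp Ubp ω (by omega) (trajD_shift Uhp Ubp n s x ω)

lemma trajD_dep (Gh : ∀ s', (∀ r, Wn r) → Uh s') (Gb : ∀ s', (∀ r, Wn r) → Ub s') :
    ∀ (n a : ℕ), (∀ s', DepOn Wn a s' (Gh s')) → (∀ s', DepOn Wn a s' (Gb s')) →
      ∀ (x : X a) (ω ω' : Ω), (∀ r, a < r → r ≤ a + n → Wp r ω = Wp r ω') →
      trajD f (toC Wp Gh) (toC Wp Gb) Wp n a x ω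
        = trajD f (toC Wp Gh) (toC Wp Gb) Wp n a x ω'
  | 0, a, _, _, x, ω, ω', _ => rfl
  | n + 1, a, hGh, hGb, x, ω, ω', hW => by
    simp only [trajD, toC]
    rw [trajD_dep Gh Gb n a hGh hGb x ω ω' (fun r h1 h2 => hW r h1 (by omega)),
      hGh (a + n) _ _ (fun r h1 h2 => hW r h1 (by omega)),
      hW (a + n + 1) (by omega) (by omega),
      hGb (a + n + 1) _ _ (fun r h1 h2 => hW r h1 (by omega))]

end DHDAux

section Indep

variable {Wn : ℕ → Type} [∀ s, Nonempty (Wn s)] {Ω : Type}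
    (P : Ω → ℝ≥0∞) (Wp : ∀ s, Ω → Wn s) (S : ℕ)

/-- extend a finite tuple of noise values to all stages -/
noncomputable def extT (u : ∀ r : Fin S, Wn (r.1 + 1)) : ∀ s, Wn s := fun s =>
  match s with
  | 0 => Classical.arbitrary _
  | t + 1 => if h : t < S then u ⟨t, h⟩ else Classical.arbitrary _

lemma indep_step (hP : ∑' ω : Ω, P ω = 1)
    (hind : ∀ w : ∀ s, Wn s,
      (∑' ω : Ω, if (∀ s, 1 ≤ s → s ≤ S → Wp s ω = w s) then P ω else 0)
        = ∏ s ∈ Finset.Icc 1 S, ∑' ω : Ω, if Wp s ω = w s then P ω else 0)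
    (a : ℕ) (ha : a + 1 ≤ S) (w : Wn (a + 1)) (h : Ω → ℝ≥0∞)
    (hh : ∀ ω ω', (∀ r, a + 1 < r → r ≤ S → Wp r ω = Wp r ω') → h ω = h ω') :
    ∑' ω : Ω, (if Wp (a + 1) ω = w then h ω * P ω else 0)
      = (∑' ω : Ω, if Wp (a + 1) ω = w then P ω else 0) * ∑' ω : Ω, h ω * P ω := by
  set T := ∀ r : Fin S, Wn (r.1 + 1) with hT
  set ψ : Ω → T := fun ω r => Wp (r.1 + 1) ω with hψ
  set ν : ∀ r : Fin S, Wn (r.1 + 1) → ℝ≥0∞ :=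
    fun r y => ∑' ω : Ω, if Wp (r.1 + 1) ω = y then P ω else 0 with hν
  set i : Fin S := ⟨a, by omega⟩ with hi
  -- joint pmf factorizes, in `Fin S` coordinates
  have hm : ∀ u : T, (∑' ω : Ω, if ψ ω = u then P ω else 0) = ∏ r : Fin S, ν r (u r) := by
    intro u
    have hiff : ∀ ω : Ω, (ψ ω = u) ↔ (∀ s, 1 ≤ s → s ≤ S → Wp s ω = extT S u s) := by
      intro ω
      constructor
      · intro hψω s h1 h2
        match s, h1 with
        | t + 1, _ =>
          have ht : t < S := by omega
          have := congrFun hψω ⟨t, ht⟩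
          simpa [extT, ht] using this
      · intro hW
        funext r
        have := hW (r.1 + 1) (by omega) (by omega)
        simpa [extT, r.2] using this
    have F : ℕ → ℝ≥0∞ := fun t => if ht : t < S then ν ⟨t, ht⟩ (u ⟨t, ht⟩) else 1
    calc ∑' ω : Ω, (if ψ ω = u then P ω else 0)
        = ∑' ω : Ω, (if (∀ s, 1 ≤ s → s ≤ S → Wp s ω = extT S u s) then P ω else 0) := by
          refine tsum_congr fun ω => ?_
          by_cases hc : ψ ω = u
          · rw [if_pos hc, if_pos ((hiff ω).mp hc)]
          · rw [if_neg hc, if_neg (fun hcon => hc ((hiff ω).mpr hcon))]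
      _ = ∏ s ∈ Finset.Icc 1 S, ∑' ω : Ω, if Wp s ω = extT S u s then P ω else 0 :=
          hind (extT S u)
      _ = ∏ s ∈ Finset.Icc 1 S,
            (fun t => if ht : t < S then ν ⟨t, ht⟩ (u ⟨t, ht⟩) else 1) (s - 1) := by
          refine Finset.prod_congr rfl fun s hs => ?_
          rw [Finset.mem_Icc] at hs
          obtain ⟨t, rfl⟩ : ∃ t, s = t + 1 := ⟨s - 1, by omega⟩
          have ht : t < S := by omega
          have he1 : t + 1 - 1 = t := by omega
          rw [he1]
          show _ = if ht' : t < S then ν ⟨t, ht'⟩ (u ⟨t, ht'⟩) else 1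
          rw [dif_pos ht]
          have hext : extT S u (t + 1) = u ⟨t, ht⟩ := by simp [extT, ht]
          rw [hext, hν]
      _ = ∏ s ∈ Finset.Ico 1 (S + 1),
            (fun t => if ht : t < S then ν ⟨t, ht⟩ (u ⟨t, ht⟩) else 1) (s - 1) := by
          rw [Finset.Ico_add_one_right_eq_Icc]
      _ = ∏ t ∈ Finset.range S,
            (fun t => if ht : t < S then ν ⟨t, ht⟩ (u ⟨t, ht⟩) else 1) (1 + t - 1) := by
          rw [Finset.prod_Ico_eq_prod_range]
          simp only [Nat.add_sub_cancel]
      _ = ∏ t ∈ Finset.range S,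
            (fun t => if ht : t < S then ν ⟨t, ht⟩ (u ⟨t, ht⟩) else 1) t := by
          refine Finset.prod_congr rfl fun t _ => ?_
          have : 1 + t - 1 = t := by omega
          rw [this]
      _ = ∏ r : Fin S,
            (fun t => if ht : t < S then ν ⟨t, ht⟩ (u ⟨t, ht⟩) else 1) r.1 :=
          (Fin.prod_univ_eq_prod_range _ S).symm
      _ = ∏ r : Fin S, ν r (u r) := by
          refine Finset.prod_congr rfl fun r _ => ?_
          simp only [dif_pos r.2, Fin.eta]
  -- the integrand as a function of the noise tuple
  set Hh : T → ℝ≥0∞ := fun u =>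
    if hne : ∃ ω : Ω, ∀ r : Fin S, a < r.1 → Wp (r.1 + 1) ω = u r then h hne.choose else 0
    with hHh
  have expand : ∀ u0 : T, Hh u0 =
      if hne : ∃ ω : Ω, ∀ r : Fin S, a < r.1 → Wp (r.1 + 1) ω = u0 r then h hne.choose
      else 0 := fun _ => rfl
  have hHdep : ∀ u u' : T, (∀ r : Fin S, a < r.1 → u r = u' r) → Hh u = Hh u' := by
    intro u u' huu
    have hex : (∃ ω : Ω, ∀ r : Fin S, a < r.1 → Wp (r.1 + 1) ω = u r)
        ↔ (∃ ω : Ω, ∀ r : Fin S, a < r.1 → Wp (r.1 + 1) ω = u' r) := by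
      constructor
      · rintro ⟨ω, hω⟩; exact ⟨ω, fun r hr => (hω r hr).trans (huu r hr)⟩
      · rintro ⟨ω, hω⟩; exact ⟨ω, fun r hr => (hω r hr).trans (huu r hr).symm⟩
    by_cases h1 : ∃ ω : Ω, ∀ r : Fin S, a < r.1 → Wp (r.1 + 1) ω = u r
    · have h2 : ∃ ω : Ω, ∀ r : Fin S, a < r.1 → Wp (r.1 + 1) ω = u' r := hex.mp h1
      rw [expand u, expand u', dif_pos h1, dif_pos h2]
      refine hh _ _ ?_
      intro r hr1 hr2
      obtain ⟨t, rfl⟩ : ∃ t, r = t + 1 := ⟨r - 1, by omega⟩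
      have htS : t < S := by omega
      have hat : a < t := by omega
      have e1 : Wp (t + 1) h1.choose = u ⟨t, htS⟩ := h1.choose_spec ⟨t, htS⟩ hat
      have e2 : Wp (t + 1) h2.choose = u' ⟨t, htS⟩ := h2.choose_spec ⟨t, htS⟩ hat
      have e3 : u ⟨t, htS⟩ = u' ⟨t, htS⟩ := huu ⟨t, htS⟩ hat
      rw [e1, e2, e3]
    · rw [expand u, expand u', dif_neg h1, dif_neg (hex.not.mp h1)]
  have hHω : ∀ ω : Ω, Hh (ψ ω) = h ω := by
    intro ω
    have hne : ∃ ω' : Ω, ∀ r : Fin S, a < r.1 → Wp (r.1 + 1) ω' = ψ ω r := ⟨ω, fun _ _ => rfl⟩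
    rw [expand (ψ ω), dif_pos hne]
    refine hh _ _ ?_
    intro r hr1 hr2
    obtain ⟨t, rfl⟩ : ∃ t, r = t + 1 := ⟨r - 1, by omega⟩
    have htS : t < S := by omega
    have hat : a < t := by omega
    exact hne.choose_spec ⟨t, htS⟩ hat
  -- grouping by the noise tuple
  have key : ∀ G : T → ℝ≥0∞,
      ∑' ω : Ω, G (ψ ω) * P ω = ∑' u : T, G u * ∏ r : Fin S, ν r (u r) := by
    intro G
    rw [tsum_fiber ψ (fun ω => G (ψ ω) * P ω)]
    refine tsum_congr fun u => ?_
    rw [← hm u, ← ENNReal.tsum_mul_left]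
    refine tsum_congr fun ω => ?_
    beta_reduce
    by_cases hc : ψ ω = u
    · rw [if_pos hc, if_pos hc, hc]
    · rw [if_neg hc, if_neg hc, mul_zero]
  -- splitting off coordinate `i`
  set e : T ≃ Wn (i.1 + 1) × ∀ r : { r : Fin S // r ≠ i }, Wn (r.1.1 + 1) :=
    Equiv.piSplitAt i (fun r : Fin S => Wn (r.1 + 1)) with he
  have hco_i : ∀ (y : Wn (i.1 + 1)) z, e.symm (y, z) i = y := by
    intro y z; simp [he, Equiv.piSplitAt]
  have hco_ne : ∀ (y : Wn (i.1 + 1)) z (r : Fin S) (hr : r ≠ i),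
      e.symm (y, z) r = z ⟨r, hr⟩ := by
    intro y z r hr; simp [he, Equiv.piSplitAt, hr]
  have hsum : ∀ G : T → ℝ≥0∞,
      ∑' u : T, G u = ∑' y, ∑' z, G (e.symm (y, z)) := by
    intro G
    rw [← Equiv.tsum_eq e.symm G]
    exact ENNReal.tsum_prod (f := fun y z => G (e.symm (y, z)))
  have hprodsplit : ∀ u : T, ∏ r : Fin S, ν r (u r)
      = ν i (u i) * ∏ r : { r : Fin S // r ≠ i }, ν r.1 (u r.1) := by
    intro u
    rw [← Finset.mul_prod_erase Finset.univ (fun r => ν r (u r)) (Finset.mem_univ i)]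
    congr 1
    rw [Finset.prod_subtype (Finset.univ.erase i) (p := fun r => r ≠ i) (by simp)
      (fun r => ν r (u r))]
  have hν1 : ∑' y : Wn (i.1 + 1), ν i y = 1 := by
    rw [hν, ← hP]
    exact (tsum_fiber (fun ω => Wp (i.1 + 1) ω) P).symm
  -- compute both sides
  have hLHS : ∑' ω : Ω, (if Wp (a + 1) ω = w then h ω * P ω else 0)
      = ν i w * ∑' z, Hh (e.symm (w, z)) * ∏ r : { r : Fin S // r ≠ i }, ν r.1 (z r) := by
    calc ∑' ω : Ω, (if Wp (a + 1) ω = w then h ω * P ω else 0)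
        = ∑' ω : Ω, (fun u => if u i = w then Hh u else 0) (ψ ω) * P ω := by
          refine tsum_congr fun ω => ?_
          show (if Wp (a + 1) ω = w then h ω * P ω else 0)
            = (if ψ ω i = w then Hh (ψ ω) else 0) * P ω
          rw [hHω ω]
          by_cases hc : Wp (a + 1) ω = w
          · rw [if_pos hc, if_pos (show ψ ω i = w from hc)]
          · rw [if_neg hc, if_neg (show ¬ψ ω i = w from hc), zero_mul]
      _ = ∑' u : T, (if u i = w then Hh u else 0) * ∏ r : Fin S, ν r (u r) :=
          key (fun u => if u i = w then Hh u else 0)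
      _ = ∑' y, ∑' z, (if y = w then Hh (e.symm (y, z)) else 0)
            * (ν i y * ∏ r : { r : Fin S // r ≠ i }, ν r.1 (z r)) := by
          rw [hsum (fun u => (if u i = w then Hh u else 0) * ∏ r : Fin S, ν r (u r))]
          refine tsum_congr fun y => tsum_congr fun z => ?_
          show (if e.symm (y, z) i = w then Hh (e.symm (y, z)) else 0)
              * ∏ r : Fin S, ν r (e.symm (y, z) r) = _
          rw [hprodsplit (e.symm (y, z)), hco_i y z]
          congr 2
          refine Finset.prod_congr rfl fun r _ => ?_
          rw [hco_ne y z r.1 r.2]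
      _ = ∑' y, (if y = w then
            ν i w * ∑' z, Hh (e.symm (w, z)) * ∏ r : { r : Fin S // r ≠ i }, ν r.1 (z r)
            else 0) := by
          refine tsum_congr fun y => ?_
          by_cases hy : y = w
          · subst hy
            rw [if_pos rfl, ← ENNReal.tsum_mul_left]
            refine tsum_congr fun z => ?_
            rw [if_pos rfl]
            ring
          · rw [if_neg hy]
            simp [hy]
      _ = ν i w * ∑' z, Hh (e.symm (w, z)) * ∏ r : { r : Fin S // r ≠ i }, ν r.1 (z r) :=
          tsum_ite_eq w _
  have hRHS : ∑' ω : Ω, h ω * P ω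
      = ∑' z, Hh (e.symm (w, z)) * ∏ r : { r : Fin S // r ≠ i }, ν r.1 (z r) := by
    calc ∑' ω : Ω, h ω * P ω
        = ∑' ω : Ω, Hh (ψ ω) * P ω := tsum_congr fun ω => by rw [hHω ω]
      _ = ∑' u : T, Hh u * ∏ r : Fin S, ν r (u r) := key Hh
      _ = ∑' y, ∑' z, Hh (e.symm (y, z))
            * (ν i y * ∏ r : { r : Fin S // r ≠ i }, ν r.1 (z r)) := by
          rw [hsum (fun u => Hh u * ∏ r : Fin S, ν r (u r))]
          refine tsum_congr fun y => tsum_congr fun z => ?_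
          show Hh (e.symm (y, z)) * ∏ r : Fin S, ν r (e.symm (y, z) r) = _
          rw [hprodsplit (e.symm (y, z)), hco_i y z]
          congr 2
          refine Finset.prod_congr rfl fun r _ => ?_
          rw [hco_ne y z r.1 r.2]
      _ = ∑' y, ν i y * ∑' z, Hh (e.symm (w, z))
            * ∏ r : { r : Fin S // r ≠ i }, ν r.1 (z r) := by
          refine tsum_congr fun y => ?_
          rw [← ENNReal.tsum_mul_left]
          refine tsum_congr fun z => ?_
          have hH : Hh (e.symm (y, z)) = Hh (e.symm (w, z)) := by
            refine hHdep _ _ fun r hr => ?_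
            have hri : r ≠ i := by
              intro hcontra; rw [hcontra] at hr; simp [hi] at hr
            rw [hco_ne y z r hri, hco_ne w z r hri]
          rw [hH]
          ring
      _ = (∑' y, ν i y) * ∑' z, Hh (e.symm (w, z))
            * ∏ r : { r : Fin S // r ≠ i }, ν r.1 (z r) := ENNReal.tsum_mul_right
      _ = ∑' z, Hh (e.symm (w, z)) * ∏ r : { r : Fin S // r ≠ i }, ν r.1 (z r) := by
          rw [hν1, one_mul]
  rw [hLHS, hRHS]

end Indep

section MainAux

variable {Wn Uh Ub X : ℕ → Type}
    [∀ s, Fintype (Wn s)] [∀ s, Nonempty (Wn s)]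
    [∀ s, Fintype (Uh s)] [∀ s, Nonempty (Uh s)]
    [∀ s, Fintype (Ub s)] [∀ s, Nonempty (Ub s)] [∀ s, Fintype (X s)]
    {Ω : Type} [Fintype Ω] [Nonempty Ω]
    (P : Ω → ℝ≥0∞) (Wp : ∀ s, Ω → Wn s) (S : ℕ)
    (f : ∀ s, X s → Uh s → Wn (s + 1) → Ub (s + 1) → X (s + 1))

lemma aux_le (hP : ∑' ω : Ω, P ω = 1)
    (hind : ∀ w : ∀ s, Wn s,
      (∑' ω : Ω, if (∀ s, 1 ≤ s → s ≤ S → Wp s ω = w s) then P ω else 0)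
        = ∏ s ∈ Finset.Icc 1 S, ∑' ω : Ω, if Wp s ω = w s then P ω else 0) :
    ∀ (n s : ℕ), s + n ≤ S → ∀ (K : X (s + n) → ℝ≥0∞) (x : X s)
      (Gh : ∀ s', (∀ r, Wn r) → Uh s') (Gb : ∀ s', (∀ r, Wn r) → Ub s'),
      (∀ s', DepOn Wn s s' (Gh s')) → (∀ s', DepOn Wn s s' (Gb s')) →
      VtilD P Wp f n s K x
        ≤ ∑' ω : Ω, K (trajD f (toC Wp Gh) (toC Wp Gb) Wp n s x ω) * P ω := by
  intro n
  induction n with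
  | zero =>
    intro s hsn K x Gh Gb _ _
    show K x ≤ ∑' ω : Ω, K x * P ω
    rw [ENNReal.tsum_mul_left, hP, mul_one]
  | succ n IH =>
    intro s hsn K x Gh Gb hGh hGb
    set v0 : ∀ r, Wn r := fun _ => Classical.arbitrary _ with hv0
    have hGhconst : ∀ v, Gh s v = Gh s v0 :=
      fun v => hGh s v v0 (fun r h1 h2 => absurd h2 (by omega))
    set uh : Uh s := Gh s v0 with huh
    set Kc : X (s + 1 + n) → ℝ≥0∞ := fun x' => K (xcast (by omega) x') with hKc
    set G : Wn (s + 1) → ℝ≥0∞ :=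
      fun w => ⨅ ub : Ub (s + 1), VtilD P Wp f n (s + 1) Kc (f s x uh w ub) with hG
    have hV : VtilD P Wp f (n + 1) s K x ≤ ∑' ω : Ω, G (Wp (s + 1) ω) * P ω := by
      have hunf : VtilD P Wp f (n + 1) s K x
          = ⨅ uh' : Uh s, ∑' ω : Ω,
            (⨅ ub : Ub (s + 1), VtilD P Wp f n (s + 1) Kc (f s x uh' (Wp (s + 1) ω) ub))
              * P ω := rfl
      rw [hunf]
      exact iInf_le _ uh
    have hgroup : ∑' ω : Ω, G (Wp (s + 1) ω) * P ω
        = ∑' w : Wn (s + 1), G w * ∑' ω : Ω, (if Wp (s + 1) ω = w then P ω else 0) := by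
      rw [tsum_fiber (fun ω => Wp (s + 1) ω) (fun ω => G (Wp (s + 1) ω) * P ω)]
      refine tsum_congr fun w => ?_
      rw [← ENNReal.tsum_mul_left]
      refine tsum_congr fun ω => ?_
      beta_reduce
      by_cases hc : Wp (s + 1) ω = w
      · rw [if_pos hc, if_pos hc, hc]
      · rw [if_neg hc, if_neg hc, mul_zero]
    have hperw : ∀ w : Wn (s + 1),
        G w * (∑' ω : Ω, if Wp (s + 1) ω = w then P ω else 0)
          ≤ ∑' ω : Ω, (if Wp (s + 1) ω = w then
              K (trajD f (toC Wp Gh) (toC Wp Gb) Wp (n + 1) s x ω) * P ω else 0) := by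
      intro w
      set Ghw : ∀ s', (∀ r, Wn r) → Uh s' :=
        fun s' v => Gh s' (Function.update v (s + 1) w) with hGhw
      set Gbw : ∀ s', (∀ r, Wn r) → Ub s' :=
        fun s' v => Gb s' (Function.update v (s + 1) w) with hGbw
      have hdGhw : ∀ s', DepOn Wn (s + 1) s' (Ghw s') := by
        intro s' v v' hvv
        refine hGh s' _ _ ?_
        intro r h1 h2
        rcases eq_or_ne r (s + 1) with rfl | hne
        · rw [Function.update_self, Function.update_self]
        · rw [Function.update_of_ne hne, Function.update_of_ne hne]
          exact hvv r (by omega) h2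
      have hdGbw : ∀ s', DepOn Wn (s + 1) s' (Gbw s') := by
        intro s' v v' hvv
        refine hGb s' _ _ ?_
        intro r h1 h2
        rcases eq_or_ne r (s + 1) with rfl | hne
        · rw [Function.update_self, Function.update_self]
        · rw [Function.update_of_ne hne, Function.update_of_ne hne]
          exact hvv r (by omega) h2
      set ubw : Ub (s + 1) := Gbw (s + 1) v0 with hubw
      set xw : X (s + 1) := f s x uh w ubw with hxw
      have hGle : G w ≤ VtilD P Wp f n (s + 1) Kc xw := iInf_le _ ubw
      have hIH := IH (s + 1) (by omega) Kc xw Ghw Gbw hdGhw hdGbw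
      set hc : Ω → ℝ≥0∞ :=
        fun ω => Kc (trajD f (toC Wp Ghw) (toC Wp Gbw) Wp n (s + 1) xw ω) with hhc
      have hdep : ∀ ω ω', (∀ r, s + 1 < r → r ≤ S → Wp r ω = Wp r ω') → hc ω = hc ω' := by
        intro ω ω' hr
        exact congrArg Kc (trajD_dep f Wp Ghw Gbw n (s + 1) hdGhw hdGbw xw ω ω'
          (fun r h1 h2 => hr r h1 (by omega)))
      have hstep := indep_step P Wp S hP hind s (by omega) w hc hdep
      have hterm : ∀ ω, (if Wp (s + 1) ω = w then hc ω * P ω else 0)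
          = (if Wp (s + 1) ω = w then
              K (trajD f (toC Wp Gh) (toC Wp Gb) Wp (n + 1) s x ω) * P ω else 0) := by
        intro ω
        by_cases hcond : Wp (s + 1) ω = w
        · rw [if_pos hcond, if_pos hcond]
          congr 1
          have hupd : Function.update (fun r => Wp r ω) (s + 1) w = fun r => Wp r ω := by
            rw [← hcond]; exact Function.update_eq_self _ _
          have h1 : trajD f (toC Wp Ghw) (toC Wp Gbw) Wp n (s + 1) xw ω
              = trajD f (toC Wp Gh) (toC Wp Gb) Wp n (s + 1) xw ω := by
            refine trajD_congr f Wp _ _ _ _ n (s + 1) xw ω ?_ ?_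
            · intro r _
              show Gh r (Function.update (fun r' => Wp r' ω) (s + 1) w)
                = Gh r (fun r' => Wp r' ω)
              rw [hupd]
            · intro r _
              show Gb r (Function.update (fun r' => Wp r' ω) (s + 1) w)
                = Gb r (fun r' => Wp r' ω)
              rw [hupd]
          have hstate : f s x (toC Wp Gh s ω) (Wp (s + 1) ω) (toC Wp Gb (s + 1) ω) = xw := by
            have e1 : toC Wp Gh s ω = uh := hGhconst _
            have e2 : toC Wp Gb (s + 1) ω = ubw := by
              show Gb (s + 1) (fun r => Wp r ω) = Gbw (s + 1) v0
              show Gb (s + 1) (fun r => Wp r ω) = Gb (s + 1) (Function.update v0 (s + 1) w)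
              refine hGb (s + 1) _ _ ?_
              intro r hr1 hr2
              have : r = s + 1 := by omega
              subst this
              rw [Function.update_self]
              exact hcond
            rw [e1, e2, hcond]
          have hsh := trajD_shift f Wp (toC Wp Gh) (toC Wp Gb) n s x ω
          rw [hstate] at hsh
          show Kc (trajD f (toC Wp Ghw) (toC Wp Gbw) Wp n (s + 1) xw ω)
            = K (trajD f (toC Wp Gh) (toC Wp Gb) Wp (n + 1) s x ω)
          rw [h1]
          show K (xcast (by omega) (trajD f (toC Wp Gh) (toC Wp Gb) Wp n (s + 1) xw ω))
            = K (trajD f (toC Wp Gh) (toC Wp Gb) Wp (n + 1) s x ω)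
          exact congrArg K (xcast_eq_of_heq _ hsh.symm)
        · rw [if_neg hcond, if_neg hcond]
      calc G w * (∑' ω : Ω, if Wp (s + 1) ω = w then P ω else 0)
          ≤ VtilD P Wp f n (s + 1) Kc xw * (∑' ω : Ω, if Wp (s + 1) ω = w then P ω else 0) :=
            mul_le_mul_left hGle _
        _ ≤ (∑' ω : Ω, hc ω * P ω) * (∑' ω : Ω, if Wp (s + 1) ω = w then P ω else 0) :=
            mul_le_mul_left hIH _
        _ = (∑' ω : Ω, if Wp (s + 1) ω = w then P ω else 0) * (∑' ω : Ω, hc ω * P ω) :=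
            mul_comm _ _
        _ = ∑' ω : Ω, (if Wp (s + 1) ω = w then hc ω * P ω else 0) := hstep.symm
        _ = ∑' ω : Ω, (if Wp (s + 1) ω = w then
              K (trajD f (toC Wp Gh) (toC Wp Gb) Wp (n + 1) s x ω) * P ω else 0) :=
            tsum_congr hterm
    calc VtilD P Wp f (n + 1) s K x
        ≤ ∑' ω : Ω, G (Wp (s + 1) ω) * P ω := hV
      _ = ∑' w : Wn (s + 1), G w * ∑' ω : Ω, (if Wp (s + 1) ω = w then P ω else 0) := hgroup
      _ ≤ ∑' w : Wn (s + 1), ∑' ω : Ω, (if Wp (s + 1) ω = w then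
            K (trajD f (toC Wp Gh) (toC Wp Gb) Wp (n + 1) s x ω) * P ω else 0) :=
          ENNReal.tsum_le_tsum hperw
      _ = ∑' ω : Ω, K (trajD f (toC Wp Gh) (toC Wp Gb) Wp (n + 1) s x ω) * P ω :=
          (tsum_fiber (fun ω => Wp (s + 1) ω) _).symm

lemma aux_ge (hP : ∑' ω : Ω, P ω = 1)
    (hind : ∀ w : ∀ s, Wn s,
      (∑' ω : Ω, if (∀ s, 1 ≤ s → s ≤ S → Wp s ω = w s) then P ω else 0)
        = ∏ s ∈ Finset.Icc 1 S, ∑' ω : Ω, if Wp s ω = w s then P ω else 0) :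
    ∀ (n s : ℕ), s + n ≤ S → ∀ (K : X (s + n) → ℝ≥0∞) (x : X s),
      ∃ (Gh : ∀ s', (∀ r, Wn r) → Uh s') (Gb : ∀ s', (∀ r, Wn r) → Ub s'),
        (∀ s', DepOn Wn s s' (Gh s')) ∧ (∀ s', DepOn Wn s s' (Gb s')) ∧
        ∑' ω : Ω, K (trajD f (toC Wp Gh) (toC Wp Gb) Wp n s x ω) * P ω
          ≤ VtilD P Wp f n s K x := by
  intro n
  induction n with
  | zero =>
    intro s hsn K x
    refine ⟨fun s' _ => Classical.arbitrary _, fun s' _ => Classical.arbitrary _,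
      fun s' v v' _ => rfl, fun s' v v' _ => rfl, ?_⟩
    show ∑' ω : Ω, K x * P ω ≤ K x
    rw [ENNReal.tsum_mul_left, hP, mul_one]
  | succ n IH =>
    intro s hsn K x
    set Kc : X (s + 1 + n) → ℝ≥0∞ := fun x' => K (xcast (by omega) x') with hKc
    obtain ⟨uh, huh⟩ := exists_iInf (fun uh' : Uh s =>
      ∑' ω : Ω, (⨅ ub : Ub (s + 1),
        VtilD P Wp f n (s + 1) Kc (f s x uh' (Wp (s + 1) ω) ub)) * P ω)
    have hub : ∀ w : Wn (s + 1), ∃ ub : Ub (s + 1),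
        VtilD P Wp f n (s + 1) Kc (f s x uh w ub)
          = ⨅ ub' : Ub (s + 1), VtilD P Wp f n (s + 1) Kc (f s x uh w ub') :=
      fun w => exists_iInf _
    choose ub hubeq using hub
    set xw : ∀ w : Wn (s + 1), X (s + 1) := fun w => f s x uh w (ub w) with hxw
    have hIH : ∀ w : Wn (s + 1), ∃ (Gh : ∀ s', (∀ r, Wn r) → Uh s')
        (Gb : ∀ s', (∀ r, Wn r) → Ub s'),
        (∀ s', DepOn Wn (s + 1) s' (Gh s')) ∧ (∀ s', DepOn Wn (s + 1) s' (Gb s')) ∧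
        ∑' ω : Ω, Kc (trajD f (toC Wp Gh) (toC Wp Gb) Wp n (s + 1) (xw w) ω) * P ω
          ≤ VtilD P Wp f n (s + 1) Kc (xw w) :=
      fun w => IH (s + 1) (by omega) Kc (xw w)
    choose Gh' Gb' hdh hdb hcost using hIH
    set GH : ∀ s', (∀ r, Wn r) → Uh s' := fun s' v =>
      if h : s' = s then xcast (X := Uh) h.symm uh
      else if s < s' then Gh' (v (s + 1)) s' v else Classical.arbitrary _ with hGH
    set GB : ∀ s', (∀ r, Wn r) → Ub s' := fun s' v =>
      if h : s' = s + 1 then xcast (X := Ub) h.symm (ub (v (s + 1)))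
      else if s + 1 < s' then Gb' (v (s + 1)) s' v else Classical.arbitrary _ with hGB
    have expandGH : ∀ s' v, GH s' v
        = if h : s' = s then xcast (X := Uh) h.symm uh
          else if s < s' then Gh' (v (s + 1)) s' v else Classical.arbitrary _ :=
      fun _ _ => rfl
    have expandGB : ∀ s' v, GB s' v
        = if h : s' = s + 1 then xcast (X := Ub) h.symm (ub (v (s + 1)))
          else if s + 1 < s' then Gb' (v (s + 1)) s' v else Classical.arbitrary _ :=
      fun _ _ => rfl
    refine ⟨GH, GB, ?_, ?_, ?_⟩
    · intro s' v v' hvv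
      rw [expandGH, expandGH]
      by_cases h1 : s' = s
      · rw [dif_pos h1, dif_pos h1]
      · rw [dif_neg h1, dif_neg h1]
        by_cases h2 : s < s'
        · rw [if_pos h2, if_pos h2]
          have hw : v (s + 1) = v' (s + 1) := hvv (s + 1) (by omega) (by omega)
          rw [hw]
          exact hdh (v' (s + 1)) s' v v' (fun r hr1 hr2 => hvv r (by omega) hr2)
        · rw [if_neg h2, if_neg h2]
    · intro s' v v' hvv
      rw [expandGB, expandGB]
      by_cases h1 : s' = s + 1
      · rw [dif_pos h1, dif_pos h1]
        have hw : v (s + 1) = v' (s + 1) := hvv (s + 1) (by omega) (by omega)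
        rw [hw]
      · rw [dif_neg h1, dif_neg h1]
        by_cases h2 : s + 1 < s'
        · rw [if_pos h2, if_pos h2]
          have hw : v (s + 1) = v' (s + 1) := hvv (s + 1) (by omega) (by omega)
          rw [hw]
          exact hdb (v' (s + 1)) s' v v' (fun r hr1 hr2 => hvv r (by omega) hr2)
        · rw [if_neg h2, if_neg h2]
    · set c : ∀ w : Wn (s + 1), Ω → ℝ≥0∞ := fun w ω =>
        Kc (trajD f (toC Wp (Gh' w)) (toC Wp (Gb' w)) Wp n (s + 1) (xw w) ω) with hcdef
      have hint : ∀ ω, K (trajD f (toC Wp GH) (toC Wp GB) Wp (n + 1) s x ω) * P ω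
          = c (Wp (s + 1) ω) ω * P ω := by
        intro ω
        congr 1
        have e1 : toC Wp GH s ω = uh := by
          show GH s (fun r => Wp r ω) = uh
          simp only [hGH]
          rw [dif_pos trivial]
          exact xcast_rfl _ _
        have e2 : toC Wp GB (s + 1) ω = ub (Wp (s + 1) ω) := by
          show GB (s + 1) (fun r => Wp r ω) = ub (Wp (s + 1) ω)
          simp only [hGB]
          rw [dif_pos trivial]
          exact xcast_rfl _ _
        have hsh := trajD_shift f Wp (toC Wp GH) (toC Wp GB) n s x ω
        rw [e1, e2] at hsh
        have hcong : trajD f (toC Wp GH) (toC Wp GB) Wp n (s + 1) (xw (Wp (s + 1) ω)) ω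
            = trajD f (toC Wp (Gh' (Wp (s + 1) ω))) (toC Wp (Gb' (Wp (s + 1) ω))) Wp n
                (s + 1) (xw (Wp (s + 1) ω)) ω := by
          refine trajD_congr f Wp _ _ _ _ n (s + 1) _ ω ?_ ?_
          · intro r hr
            show GH r (fun r' => Wp r' ω) = Gh' (Wp (s + 1) ω) r (fun r' => Wp r' ω)
            simp only [hGH]
            rw [dif_neg (show ¬r = s by omega), if_pos (show s < r by omega)]
          · intro r hr
            show GB r (fun r' => Wp r' ω) = Gb' (Wp (s + 1) ω) r (fun r' => Wp r' ω)
            simp only [hGB]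
            rw [dif_neg (show ¬r = s + 1 by omega), if_pos (show s + 1 < r by omega)]
        show K (trajD f (toC Wp GH) (toC Wp GB) Wp (n + 1) s x ω)
          = Kc (trajD f (toC Wp (Gh' (Wp (s + 1) ω))) (toC Wp (Gb' (Wp (s + 1) ω))) Wp n
              (s + 1) (xw (Wp (s + 1) ω)) ω)
        rw [← hcong]
        show K (trajD f (toC Wp GH) (toC Wp GB) Wp (n + 1) s x ω)
          = K (xcast (by omega)
              (trajD f (toC Wp GH) (toC Wp GB) Wp n (s + 1) (xw (Wp (s + 1) ω)) ω))
        exact (congrArg K (xcast_eq_of_heq _ hsh.symm)).symm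
      have hgroup2 : ∑' ω : Ω, (⨅ ub' : Ub (s + 1),
            VtilD P Wp f n (s + 1) Kc (f s x uh (Wp (s + 1) ω) ub')) * P ω
          = ∑' w : Wn (s + 1), (⨅ ub' : Ub (s + 1),
              VtilD P Wp f n (s + 1) Kc (f s x uh w ub'))
                * ∑' ω : Ω, (if Wp (s + 1) ω = w then P ω else 0) := by
        rw [tsum_fiber (fun ω => Wp (s + 1) ω) (fun ω => (⨅ ub' : Ub (s + 1),
          VtilD P Wp f n (s + 1) Kc (f s x uh (Wp (s + 1) ω) ub')) * P ω)]
        refine tsum_congr fun w => ?_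
        rw [← ENNReal.tsum_mul_left]
        refine tsum_congr fun ω => ?_
        beta_reduce
        by_cases hcond : Wp (s + 1) ω = w
        · rw [if_pos hcond, if_pos hcond, hcond]
        · rw [if_neg hcond, if_neg hcond, mul_zero]
      calc ∑' ω : Ω, K (trajD f (toC Wp GH) (toC Wp GB) Wp (n + 1) s x ω) * P ω
          = ∑' ω : Ω, c (Wp (s + 1) ω) ω * P ω := tsum_congr hint
        _ = ∑' w : Wn (s + 1), ∑' ω : Ω,
              (if Wp (s + 1) ω = w then c (Wp (s + 1) ω) ω * P ω else 0) :=
            tsum_fiber (fun ω => Wp (s + 1) ω) _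
        _ = ∑' w : Wn (s + 1), ∑' ω : Ω, (if Wp (s + 1) ω = w then c w ω * P ω else 0) := by
            refine tsum_congr fun w => tsum_congr fun ω => ?_
            by_cases hcond : Wp (s + 1) ω = w
            · rw [if_pos hcond, if_pos hcond, hcond]
            · rw [if_neg hcond, if_neg hcond]
        _ = ∑' w : Wn (s + 1), (∑' ω : Ω, if Wp (s + 1) ω = w then P ω else 0)
              * ∑' ω : Ω, c w ω * P ω := by
            refine tsum_congr fun w => ?_
            refine indep_step P Wp S hP hind s (by omega) w (c w) ?_
            intro ω ω' hr
            exact congrArg Kc (trajD_dep f Wp (Gh' w) (Gb' w) n (s + 1) (hdh w) (hdb w)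
              (xw w) ω ω' (fun r h1 h2 => hr r h1 (by omega)))
        _ ≤ ∑' w : Wn (s + 1), (∑' ω : Ω, if Wp (s + 1) ω = w then P ω else 0)
              * VtilD P Wp f n (s + 1) Kc (xw w) :=
            ENNReal.tsum_le_tsum fun w => mul_le_mul_right (hcost w) _
        _ = ∑' w : Wn (s + 1), (⨅ ub' : Ub (s + 1),
              VtilD P Wp f n (s + 1) Kc (f s x uh w ub'))
                * ∑' ω : Ω, (if Wp (s + 1) ω = w then P ω else 0) := by
            refine tsum_congr fun w => ?_
            rw [← hubeq w, mul_comm]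
        _ = ∑' ω : Ω, (⨅ ub' : Ub (s + 1),
              VtilD P Wp f n (s + 1) Kc (f s x uh (Wp (s + 1) ω) ub')) * P ω := hgroup2.symm
        _ = VtilD P Wp f (n + 1) s K x := huh.trans (by rfl)

end MainAux

/-- decision-hazard-decision dynamic programming with independent noises
(finite case). With `(W♭_1,…,W♭_S)` mutually independent (joint pmf factorizes),
`Ṽ_S = j̃` and `Ṽ_s(x) = inf_{u♯} E[ inf_{u♭} Ṽ_{s+1}(f_s(x,u♯,W♭_{s+1},u♭)) ]`, the value
`Ṽ_s(x_s)` equals the infimum over head control processes (`σ(U♯_{s'}) ⊆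
σ(W♭_{s+1},…,W♭_{s'})`) and tail control processes (`σ(U♭_{s'}) ⊆ σ(W♭_{s+1},…,W♭_{s'})`)
of `E[ j̃(X_S) ]`, where `X_s = x_s` and
`X_{s'+1} = f_{s'}(X_{s'}, U♯_{s'}, W♭_{s'+1}, U♭_{s'+1})`. -/
theorem dhd_dp_independent {Wn Uh Ub X : ℕ → Type}
    [∀ s, Fintype (Wn s)] [∀ s, Nonempty (Wn s)]
    [∀ s, Fintype (Uh s)] [∀ s, Nonempty (Uh s)]
    [∀ s, Fintype (Ub s)] [∀ s, Nonempty (Ub s)] [∀ s, Fintype (X s)]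
    {Ω : Type} [Fintype Ω] [Nonempty Ω]
    (P : Ω → ℝ≥0∞) (hP : ∑' ω : Ω, P ω = 1)
    (Wp : ∀ s, Ω → Wn s) (S : ℕ)
    (hind : ∀ w : ∀ s, Wn s,
      (∑' ω : Ω, if (∀ s, 1 ≤ s → s ≤ S → Wp s ω = w s) then P ω else 0)
        = ∏ s ∈ Finset.Icc 1 S, ∑' ω : Ω, if Wp s ω = w s then P ω else 0)
    (f : ∀ s, X s → Uh s → Wn (s + 1) → Ub (s + 1) → X (s + 1))
    (jt : X S → ℝ≥0∞)
    (n s : ℕ) (e : s + n = S) (x : X s) :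
    VtilD P Wp f n s (fun x' => jt (xcast e x')) x
      = ⨅ p : {q : (∀ s', Ω → Uh s') × (∀ s', Ω → Ub s') //
            (∀ (s' : ℕ) (ω ω' : Ω),
              (∀ r, s < r → r ≤ s' → Wp r ω = Wp r ω') → q.1 s' ω = q.1 s' ω') ∧
            (∀ (s' : ℕ) (ω ω' : Ω),
              (∀ r, s < r → r ≤ s' → Wp r ω = Wp r ω') → q.2 s' ω = q.2 s' ω')},
          ∑' ω : Ω, jt (xcast e (trajD f p.1.1 p.1.2 Wp n s x ω)) * P ω := by
  have hsn : s + n ≤ S := le_of_eq e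
  apply le_antisymm
  · refine le_iInf ?_
    rintro ⟨⟨qh, qb⟩, hq1, hq2⟩
    set Gh : ∀ s', (∀ r, Wn r) → Uh s' := fun s' v =>
      if hex : ∃ ω : Ω, ∀ r, s < r → r ≤ s' → Wp r ω = v r then qh s' hex.choose
      else Classical.arbitrary _ with hGh
    set Gb : ∀ s', (∀ r, Wn r) → Ub s' := fun s' v =>
      if hex : ∃ ω : Ω, ∀ r, s < r → r ≤ s' → Wp r ω = v r then qb s' hex.choose
      else Classical.arbitrary _ with hGb
    have hdh : ∀ s', DepOn Wn s s' (Gh s') := by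
      intro s' v v' hvv
      simp only [hGh]
      have hex : (∃ ω : Ω, ∀ r, s < r → r ≤ s' → Wp r ω = v r)
          ↔ (∃ ω : Ω, ∀ r, s < r → r ≤ s' → Wp r ω = v' r) := by
        constructor
        · rintro ⟨ω, hω⟩; exact ⟨ω, fun r h1 h2 => (hω r h1 h2).trans (hvv r h1 h2)⟩
        · rintro ⟨ω, hω⟩; exact ⟨ω, fun r h1 h2 => (hω r h1 h2).trans (hvv r h1 h2).symm⟩
      by_cases h1 : ∃ ω : Ω, ∀ r, s < r → r ≤ s' → Wp r ω = v r
      · have h2 := hex.mp h1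
        rw [dif_pos h1, dif_pos h2]
        refine hq1 s' _ _ ?_
        intro r hr1 hr2
        rw [h1.choose_spec r hr1 hr2, h2.choose_spec r hr1 hr2]
        exact hvv r hr1 hr2
      · rw [dif_neg h1, dif_neg (hex.not.mp h1)]
    have hdb : ∀ s', DepOn Wn s s' (Gb s') := by
      intro s' v v' hvv
      simp only [hGb]
      have hex : (∃ ω : Ω, ∀ r, s < r → r ≤ s' → Wp r ω = v r)
          ↔ (∃ ω : Ω, ∀ r, s < r → r ≤ s' → Wp r ω = v' r) := by
        constructor
        · rintro ⟨ω, hω⟩; exact ⟨ω, fun r h1 h2 => (hω r h1 h2).trans (hvv r h1 h2)⟩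
        · rintro ⟨ω, hω⟩; exact ⟨ω, fun r h1 h2 => (hω r h1 h2).trans (hvv r h1 h2).symm⟩
      by_cases h1 : ∃ ω : Ω, ∀ r, s < r → r ≤ s' → Wp r ω = v r
      · have h2 := hex.mp h1
        rw [dif_pos h1, dif_pos h2]
        refine hq2 s' _ _ ?_
        intro r hr1 hr2
        rw [h1.choose_spec r hr1 hr2, h2.choose_spec r hr1 hr2]
        exact hvv r hr1 hr2
      · rw [dif_neg h1, dif_neg (hex.not.mp h1)]
    have hmh : ∀ s' ω, toC Wp Gh s' ω = qh s' ω := by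
      intro s' ω
      show Gh s' (fun r => Wp r ω) = qh s' ω
      simp only [hGh]
      have hex : ∃ ω' : Ω, ∀ r, s < r → r ≤ s' → Wp r ω' = Wp r ω := ⟨ω, fun _ _ _ => rfl⟩
      rw [dif_pos hex]
      exact hq1 s' _ _ (fun r h1 h2 => hex.choose_spec r h1 h2)
    have hmb : ∀ s' ω, toC Wp Gb s' ω = qb s' ω := by
      intro s' ω
      show Gb s' (fun r => Wp r ω) = qb s' ω
      simp only [hGb]
      have hex : ∃ ω' : Ω, ∀ r, s < r → r ≤ s' → Wp r ω' = Wp r ω := ⟨ω, fun _ _ _ => rfl⟩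
      rw [dif_pos hex]
      exact hq2 s' _ _ (fun r h1 h2 => hex.choose_spec r h1 h2)
    have hcosteq : ∀ ω, trajD f (toC Wp Gh) (toC Wp Gb) Wp n s x ω
        = trajD f qh qb Wp n s x ω := fun ω =>
      trajD_congr f Wp (toC Wp Gh) qh (toC Wp Gb) qb n s x ω
        (fun r _ => hmh r ω) (fun r _ => hmb r ω)
    calc VtilD P Wp f n s (fun x' => jt (xcast e x')) x
        ≤ ∑' ω : Ω, jt (xcast e (trajD f (toC Wp Gh) (toC Wp Gb) Wp n s x ω)) * P ω :=
          aux_le P Wp S f hP hind n s hsn (fun x' => jt (xcast e x')) x Gh Gb hdh hdb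
      _ = ∑' ω : Ω, jt (xcast e (trajD f qh qb Wp n s x ω)) * P ω :=
          tsum_congr fun ω => by rw [hcosteq ω]
  · obtain ⟨Gh, Gb, hdh, hdb, hle⟩ :=
      aux_ge P Wp S f hP hind n s hsn (fun x' => jt (xcast e x')) x
    refine iInf_le_of_le ⟨⟨toC Wp Gh, toC Wp Gb⟩, ?_, ?_⟩ ?_
    · intro s' ω ω' hww
      exact hdh s' _ _ (fun r h1 h2 => hww r h1 h2)
    · intro s' ω ω' hww
      exact hdb s' _ _ (fun r h1 h2 => hww r h1 h2)
    · exact hle
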